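/- Fix an integer k ≥ 0. Then as m → ∞, T(m − k, m) is asymptotically equivalent to G(m − k, m), and hence to (m^k / (2^k k!)) · m!; in particular the ratio T(m − k, m) / G(m − k, m) converges to 1 as m → ∞. -/

import Mathlib

/-- `G r m = ∑_{k₁+⋯+k_r = m, kᵢ ≥ 1} m!/(k₁!⋯k_r!)`, the sum of multinomial
coefficients over all `r`-tuples of positive integers summing to `m`. -/
def G (r m : ℕ) : ℕ :=
  ∑ k ∈ (Finset.Nat.antidiagonalTuple r m).filter (fun k => ∀ i, 0 < k i),
    Nat.multinomial Finset.univ k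

/-- `T r m`, the number of affine subspaces of the expansion manifold:
`T(r,m) = ∑_{j=0}^{m−r} ∑_s m!/(k₁!⋯k_r! b₁!⋯b_j!) · 1/(c₁!⋯c_{m−r}!)`, summing over
all `(r+j)`-tuples `s = (k₁,…,k_r,b₁,…,b_j)` of positive integers with total sum `m`,
where `cᵢ` is the number of occurrences of `i` among `(b₁,…,b_j)`. The tuple `s` is
encoded as `s : Fin (r+j) → ℕ`, whose last `j` entries are the `b`'s. -/
def T (r m : ℕ) : ℚ :=
  ∑ j ∈ Finset.range (m - r + 1),
    ∑ s ∈ (Finset.Nat.antidiagonalTuple (r + j) m).filter (fun s => ∀ i, 0 < s i),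
      (Nat.multinomial Finset.univ s : ℚ) /
        ∏ i ∈ Finset.Icc 1 (m - r),
          (Nat.factorial
            ((Finset.univ.filter fun t : Fin j => s (Fin.natAdd r t) = i).card) : ℚ)


open Finset
open scoped Nat


/-- The set of positive `n`-tuples summing to `M`. -/
def Apos (n M : ℕ) : Finset (Fin n → ℕ) :=
  (Finset.Nat.antidiagonalTuple n M).filter (fun s => ∀ i, 0 < s i)

lemma mem_Apos {n M : ℕ} {s : Fin n → ℕ} :
    s ∈ Apos n M ↔ (∑ i, s i = M) ∧ ∀ i, 0 < s i := by
  simp [Apos, Finset.Nat.mem_antidiagonalTuple]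

lemma sum_excess {n M : ℕ} {s : Fin n → ℕ} (hs : s ∈ Apos n M) :
    ∑ i, (s i - 1) = M - n := by
  obtain ⟨h1, h2⟩ := mem_Apos.mp hs
  have h3 : (∑ i, (s i - 1)) + ∑ _i : Fin n, 1 = ∑ i, s i := by
    rw [← Finset.sum_add_distrib]
    exact Finset.sum_congr rfl fun i _ => by have := h2 i; omega
  simp only [Finset.sum_const, Finset.card_univ, Fintype.card_fin, smul_eq_mul, mul_one] at h3
  omega


lemma card_multiset_sum {α β : Type*} (s : Finset α) (f : α → Multiset β) :
    Multiset.card (∑ i ∈ s, f i) = ∑ i ∈ s, Multiset.card (f i) := by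
  classical
  induction s using Finset.induction with
  | empty => simp
  | insert _ _ h ih => simp [Finset.sum_insert h, ih]

lemma card_Apos_le (n M : ℕ) :
    (Apos n M).card ≤ Nat.multichoose n (M - n) := by
  classical
  have : (Apos n M).card ≤ (Finset.univ : Finset (Sym (Fin n) (M - n))).card := by
    apply Finset.card_le_card_of_surjOn (fun x : Sym (Fin n) (M - n) =>
      (fun i => Multiset.count i x.1 + 1))
    intro s hs
    have hs' : s ∈ Apos n M := hs
    refine ⟨⟨∑ i, (s i - 1) • ({i} : Multiset (Fin n)), ?_⟩, Finset.mem_coe.mpr (Finset.mem_univ _), ?_⟩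
    · rw [card_multiset_sum]
      simpa using sum_excess hs'
    · funext j
      have hc : Multiset.count j (∑ i, (s i - 1) • ({i} : Multiset (Fin n))) = s j - 1 := by
        rw [Multiset.count_sum']
        simp [Multiset.count_singleton]
      have := (mem_Apos.mp hs').2 j
      simp only [hc]
      omega
  simpa [Sym.card_sym_eq_multichoose] using this

lemma multinomial_le_factorial {n M : ℕ} {s : Fin n → ℕ} (hs : ∑ i, s i = M) :
    Nat.multinomial Finset.univ s ≤ M ! := by
  rw [← hs, ← Nat.multinomial_spec]
  exact Nat.le_mul_of_pos_left _ (Finset.prod_pos fun i _ => Nat.factorial_pos _)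

lemma multinomial_cast_eq {n M : ℕ} {s : Fin n → ℕ} (hs : ∑ i, s i = M) :
    (Nat.multinomial Finset.univ s : ℚ) = (M ! : ℚ) / ∏ i, ((s i)! : ℚ) := by
  have hpos : (0:ℚ) < ∏ i, ((s i)! : ℚ) :=
    Finset.prod_pos fun i _ => by exact_mod_cast Nat.factorial_pos _
  rw [eq_div_iff hpos.ne']
  have := Nat.multinomial_spec Finset.univ s
  rw [hs] at this
  push_cast [← this]
  ring

lemma G_eq (r m : ℕ) : G r m = ∑ s ∈ Apos r m, Nat.multinomial Finset.univ s := rfl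

lemma G_le_T (r m : ℕ) : (G r m : ℚ) ≤ T r m := by
  classical
  have h0 : (0:ℕ) ∈ Finset.range (m - r + 1) := by simp
  have hterm0 : ∑ s ∈ (Finset.Nat.antidiagonalTuple (r + 0) m).filter (fun s => ∀ i, 0 < s i),
      (Nat.multinomial Finset.univ s : ℚ) /
        ∏ i ∈ Finset.Icc 1 (m - r),
          (Nat.factorial
            ((Finset.univ.filter fun t : Fin 0 => s (Fin.natAdd r t) = i).card) : ℚ)
      = (G r m : ℚ) := by
    rw [G_eq]
    push_cast
    apply Finset.sum_congr rfl
    intro s _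
    simp
  rw [← hterm0]
  apply Finset.single_le_sum (f := fun j =>
          ∑ s ∈ (Finset.Nat.antidiagonalTuple (r + j) m).filter (fun s => ∀ i, 0 < s i),
            (Nat.multinomial Finset.univ s : ℚ) /
              ∏ i ∈ Finset.Icc 1 (m - r),
                (Nat.factorial
                  ((Finset.univ.filter fun t : Fin j => s (Fin.natAdd r t) = i).card) : ℚ))
          (fun j _ => Finset.sum_nonneg fun s _ => div_nonneg (by positivity)
            (Finset.prod_nonneg fun i _ => by positivity)) h0

lemma T_le (r m : ℕ) : T r m ≤ (G r m : ℚ) +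
    ∑ j ∈ Finset.range (m - r), ((Apos (r + (j+1)) m).card : ℚ) * (m ! : ℚ) := by
  classical
  rw [T, Finset.sum_range_succ']
  rw [add_comm]
  gcongr with j hj
  · -- j = 0 term equals G
    rw [G_eq]
    push_cast
    apply le_of_eq
    apply Finset.sum_congr rfl
    intro s _
    simp
  · -- other terms
    have := Finset.sum_le_card_nsmul (Apos (r + (j+1)) m)
      (fun s =>
        (Nat.multinomial Finset.univ s : ℚ) /
          ∏ i ∈ Finset.Icc 1 (m - r),
            (Nat.factorial
              ((Finset.univ.filter fun t : Fin (j+1) => s (Fin.natAdd r t) = i).card) : ℚ))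
      ((m : ℕ)! : ℚ) ?_
    · simpa [nsmul_eq_mul, Apos] using this
    intro s hs
    have hmem : s ∈ Apos (r + (j+1)) m := hs
    have hsum := (mem_Apos.mp hmem).1
    calc _ ≤ (Nat.multinomial Finset.univ s : ℚ) := by
          apply div_le_self (by positivity)
          calc (1:ℚ) = ∏ _i ∈ Finset.Icc 1 (m - r), (1:ℚ) := by simp
            _ ≤ _ := by
                apply Finset.prod_le_prod (fun i _ => zero_le_one)
                intro i _
                exact_mod_cast Nat.one_le_iff_ne_zero.mpr (Nat.factorial_pos _).ne'
      _ ≤ (m ! : ℚ) := by exact_mod_cast multinomial_le_factorial hsum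

lemma Apos_empty_of_lt {n M : ℕ} (h : M < n) : Apos n M = ∅ := by
  classical
  rw [Finset.eq_empty_iff_forall_notMem]
  intro s hs
  obtain ⟨h1, h2⟩ := mem_Apos.mp hs
  have : (n : ℕ) ≤ ∑ i, s i := by
    calc (n:ℕ) = ∑ _i : Fin n, 1 := by simp
      _ ≤ ∑ i, s i := Finset.sum_le_sum fun i _ => h2 i
  omega

lemma choose_le_pow' (a b : ℕ) : a.choose b ≤ a ^ b :=
  calc a.choose b ≤ b ! * a.choose b := Nat.le_mul_of_pos_left _ (Nat.factorial_pos b)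
    _ = a.descFactorial b := (Nat.descFactorial_eq_factorial_mul_choose a b).symm
    _ ≤ a ^ b := Nat.descFactorial_le_pow a b

section Gbounds

variable {k m : ℕ}

lemma two_card (hk : k ≤ m) {s : Fin (m - k) → ℕ} (hs : s ∈ Apos (m - k) m)
    (h2 : ∀ i, s i ≤ 2) : (Finset.univ.filter fun i => s i = 2).card = k := by
  classical
  obtain ⟨h1, hpos⟩ := mem_Apos.mp hs
  have hsplit := Finset.sum_filter_add_sum_filter_not Finset.univ (fun i => s i = 2) s
  have hA : ∑ i ∈ Finset.univ.filter (fun i => s i = 2), s i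
      = 2 * (Finset.univ.filter fun i => s i = 2).card := by
    rw [Finset.sum_congr rfl (fun i hi => (Finset.mem_filter.mp hi).2)]
    simp [mul_comm]
  have hB : ∑ i ∈ Finset.univ.filter (fun i => ¬ s i = 2), s i
      = (Finset.univ.filter fun i => ¬ s i = 2).card := by
    rw [Finset.sum_congr rfl (fun i hi => ?_), Finset.sum_const, smul_eq_mul, mul_one]
    have := (Finset.mem_filter.mp hi).2
    have := hpos i
    have := h2 i
    omega
  have hcards := Finset.card_filter_add_card_filter_not
    (s := (Finset.univ : Finset (Fin (m - k)))) (p := fun i => s i = 2)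
  rw [Finset.card_univ, Fintype.card_fin] at hcards
  rw [hA, hB, h1] at hsplit
  omega

lemma prod_two (hk : k ≤ m) {s : Fin (m - k) → ℕ} (hs : s ∈ Apos (m - k) m)
    (h2 : ∀ i, s i ≤ 2) : ∏ i, (s i)! = 2 ^ k := by
  classical
  obtain ⟨h1, hpos⟩ := mem_Apos.mp hs
  rw [← Finset.prod_filter_mul_prod_filter_not Finset.univ (fun i => s i = 2)]
  have hA : ∏ i ∈ Finset.univ.filter (fun i => s i = 2), (s i)!
      = 2 ^ (Finset.univ.filter fun i => s i = 2).card := by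
    rw [Finset.prod_congr rfl (fun i hi => ?_), Finset.prod_const]
    rw [(Finset.mem_filter.mp hi).2]
    rfl
  have hB : ∏ i ∈ Finset.univ.filter (fun i => ¬ s i = 2), (s i)! = 1 := by
    rw [Finset.prod_congr rfl (fun i hi => ?_), Finset.prod_const, one_pow]
    have h' := (Finset.mem_filter.mp hi).2
    have := hpos i
    have := h2 i
    have hs1 : s i = 1 := by omega
    rw [hs1]
    rfl
  rw [hA, hB, two_card hk hs h2, mul_one]

lemma card_Btwo (hk : 2 * k ≤ m) :
    ((Apos (m - k) m).filter fun s => ∀ i, s i ≤ 2).card = (m - k).choose k := by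
  classical
  have hpc : (m - k).choose k
      = (Finset.powersetCard k (Finset.univ : Finset (Fin (m - k)))).card := by
    rw [Finset.card_powersetCard, Finset.card_univ, Fintype.card_fin]
  rw [hpc]
  apply Finset.card_bij' (i := fun s _ => Finset.univ.filter fun i => s i = 2)
      (j := fun A _ => fun i => if i ∈ A then 2 else 1)
  · intro s hs
    obtain ⟨hs', h2⟩ := Finset.mem_filter.mp hs
    have hpos := (mem_Apos.mp hs').2
    funext i
    simp only [Finset.mem_filter, Finset.mem_univ, true_and]
    split_ifs with h
    · exact h.symm
    · have := hpos i; have := h2 i; omega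
  · intro A hA
    ext i
    simp only [Finset.mem_filter, Finset.mem_univ, true_and]
    constructor
    · intro h; by_contra hc; simp [hc] at h
    · intro h; simp [h]
  · intro s hs
    obtain ⟨hs', h2⟩ := Finset.mem_filter.mp hs
    rw [Finset.mem_powersetCard]
    exact ⟨Finset.filter_subset _ _, two_card (by omega) hs' h2⟩
  · intro A hA
    rw [Finset.mem_powersetCard] at hA
    rw [Finset.mem_filter]
    constructor
    · rw [mem_Apos]
      constructor
      · have h1 : (∑ i : Fin (m-k), if i ∈ A then 2 else (1:ℕ))
            = (∑ i : Fin (m-k), ((if i ∈ A then (1:ℕ) else 0) + 1)) :=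
          Finset.sum_congr rfl fun i _ => by split_ifs <;> rfl
        rw [h1, Finset.sum_add_distrib, Finset.sum_ite_mem, Finset.univ_inter,
          Finset.sum_const, Finset.sum_const, smul_eq_mul, mul_one, smul_eq_mul, mul_one,
          hA.2, Finset.card_univ, Fintype.card_fin]
        omega
      · intro i; by_cases h : i ∈ A <;> simp [h]
    · intro i; by_cases h : i ∈ A <;> simp [h]

lemma card_bad_le (n M : ℕ) :
    ((Apos n M).filter fun s => ¬ ∀ i, s i ≤ 2).card ≤ n * (Apos n (M - 2)).card := by
  classical
  have h := Finset.card_le_card_of_surjOn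
    (s := (Finset.univ : Finset (Fin n)) ×ˢ Apos n (M - 2))
    (t := (Apos n M).filter fun s => ¬ ∀ i, s i ≤ 2)
    (fun p => Function.update p.2 p.1 (p.2 p.1 + 2)) ?_
  · simpa [Finset.card_product] using h
  intro s hs
  obtain ⟨hs', hbad⟩ := Finset.mem_filter.mp (hs : _)
  push_neg at hbad
  obtain ⟨i, hi⟩ := hbad
  obtain ⟨h1, hpos⟩ := mem_Apos.mp hs'
  have herase : ∑ x ∈ Finset.univ.erase i, s x + s i = M := by
    rw [Finset.sum_erase_add _ _ (Finset.mem_univ i)]; exact h1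
  refine ⟨(i, Function.update s i (s i - 2)), ?_, ?_⟩
  · rw [Finset.mem_coe, Finset.mem_product]
    refine ⟨Finset.mem_univ _, mem_Apos.mpr ⟨?_, ?_⟩⟩
    · rw [Finset.sum_update_of_mem (Finset.mem_univ i)]
      rw [Finset.sdiff_singleton_eq_erase]
      omega
    · intro j
      dsimp only
      rcases eq_or_ne j i with rfl | hne
      · rw [Function.update_self]; omega
      · rw [Function.update_of_ne hne]; exact hpos j
  · funext j
    dsimp only
    rcases eq_or_ne j i with rfl | hne
    · simp only [Function.update_self]; omega
    · simp only [Function.update_of_ne hne]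

end Gbounds

section Master

variable {k m : ℕ}

lemma GQ_eq (r m : ℕ) : (G r m : ℚ) = ∑ s ∈ Apos r m, (Nat.multinomial Finset.univ s : ℚ) := by
  rw [G_eq]; push_cast; rfl

lemma sum_Btwo_eq (hm : 2*k + 4 ≤ m) :
    ∑ s ∈ (Apos (m-k) m).filter (fun s => ∀ i, s i ≤ 2), (Nat.multinomial Finset.univ s : ℚ)
      = ((m-k).choose k : ℚ) * ((m ! : ℚ) / 2^k) := by
  classical
  rw [Finset.sum_congr rfl (fun s hs => ?_), Finset.sum_const, card_Btwo (by omega),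
    nsmul_eq_mul]
  obtain ⟨hs', h2⟩ := Finset.mem_filter.mp hs
  rw [multinomial_cast_eq (mem_Apos.mp hs').1]
  have := prod_two (k := k) (by omega) hs' h2
  have hcast : (∏ i, ((s i)! : ℚ)) = (2:ℚ)^k := by
    rw [← Nat.cast_prod, this]; push_cast; ring
  rw [hcast]

lemma card_bad_le' (hm : 2*k + 4 ≤ m) :
    ((Apos (m-k) m).filter fun s => ¬ ∀ i, s i ≤ 2).card ≤ k * m ^ (k-1) := by
  by_cases hk2 : k ≤ 1
  · have he : Apos (m-k) (m-2) = ∅ := Apos_empty_of_lt (by omega)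
    have h := card_bad_le (m-k) m
    rw [he, Finset.card_empty, Nat.mul_zero] at h
    exact le_trans h (Nat.zero_le _)
  · push_neg at hk2
    have hd : (m-2) - (m-k) = k-2 := by omega
    calc ((Apos (m-k) m).filter fun s => ¬ ∀ i, s i ≤ 2).card
        ≤ (m-k) * (Apos (m-k) (m-2)).card := card_bad_le _ _
      _ ≤ (m-k) * Nat.multichoose (m-k) ((m-2) - (m-k)) :=
          Nat.mul_le_mul_left _ (card_Apos_le _ _)
      _ = (m-k) * ((m-k) + (k-2) - 1).choose (k-2) := by rw [hd, Nat.multichoose_eq]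
      _ ≤ m * m ^ (k-2) := Nat.mul_le_mul (by omega)
          (le_trans (choose_le_pow' _ _) (Nat.pow_le_pow_left (by omega) _))
      _ = m ^ (k-1) := by
          rw [← pow_succ']
          congr 1
          omega
      _ ≤ k * m ^ (k-1) := Nat.le_mul_of_pos_left _ (by omega)

lemma hGlow (hm : 2*k + 4 ≤ m) :
    ((m-k).choose k : ℚ) * ((m ! : ℚ) / 2^k) ≤ (G (m-k) m : ℚ) := by
  classical
  rw [GQ_eq, ← Finset.sum_filter_add_sum_filter_not (Apos (m-k) m) (fun s => ∀ i, s i ≤ 2),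
    ← sum_Btwo_eq hm]
  exact le_add_of_nonneg_right (Finset.sum_nonneg fun s _ => by positivity)

lemma hGhigh (hm : 2*k + 4 ≤ m) :
    (G (m-k) m : ℚ) ≤ ((m-k).choose k : ℚ) * ((m ! : ℚ) / 2^k)
      + ((k * m ^ (k-1) : ℕ) : ℚ) * (m ! : ℚ) := by
  classical
  rw [GQ_eq, ← Finset.sum_filter_add_sum_filter_not (Apos (m-k) m) (fun s => ∀ i, s i ≤ 2),
    sum_Btwo_eq hm]
  gcongr
  calc ∑ s ∈ (Apos (m-k) m).filter (fun s => ¬ ∀ i, s i ≤ 2),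
        (Nat.multinomial Finset.univ s : ℚ)
      ≤ ∑ _s ∈ (Apos (m-k) m).filter (fun s => ¬ ∀ i, s i ≤ 2), (m ! : ℚ) := by
        apply Finset.sum_le_sum
        intro s hs
        have hs' := (Finset.mem_filter.mp hs).1
        exact_mod_cast multinomial_le_factorial (mem_Apos.mp hs').1
    _ = (((Apos (m-k) m).filter fun s => ¬ ∀ i, s i ≤ 2).card : ℚ) * (m ! : ℚ) := by
        rw [Finset.sum_const, nsmul_eq_mul]
    _ ≤ ((k * m ^ (k-1) : ℕ) : ℚ) * (m ! : ℚ) := by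
        gcongr
        exact_mod_cast card_bad_le' hm

lemma hThigh (hm : 2*k + 4 ≤ m) :
    T (m-k) m ≤ (G (m-k) m : ℚ) + ((k * m ^ (k-1) : ℕ) : ℚ) * (m ! : ℚ) := by
  classical
  have hmk : m - (m-k) = k := by omega
  refine le_trans (T_le (m-k) m) ?_
  gcongr
  rw [hmk]
  have hcard : ∀ j, j < k → ((Apos ((m-k) + (j+1)) m).card : ℚ) ≤ ((m ^ (k-1) : ℕ) : ℚ) := by
    intro j hj
    have h1 : (Apos ((m-k) + (j+1)) m).card ≤ m ^ (k-1) := by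
      calc (Apos ((m-k) + (j+1)) m).card
          ≤ Nat.multichoose ((m-k) + (j+1)) (m - ((m-k) + (j+1))) := card_Apos_le _ _
        _ = ((m-k) + (j+1) + (m - ((m-k) + (j+1))) - 1).choose (m - ((m-k) + (j+1))) :=
            Nat.multichoose_eq _ _
        _ ≤ m ^ (k-1) := by
            have h2 : (m-k) + (j+1) + (m - ((m-k) + (j+1))) - 1 = m - 1 := by omega
            have h3 : m - ((m-k) + (j+1)) = k - j - 1 := by omega
            rw [h2, h3]
            calc (m-1).choose (k-j-1) ≤ (m-1) ^ (k-j-1) := choose_le_pow' _ _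
              _ ≤ m ^ (k-j-1) := Nat.pow_le_pow_left (by omega) _
              _ ≤ m ^ (k-1) := Nat.pow_le_pow_right (by omega) (by omega)
    exact_mod_cast h1
  calc ∑ j ∈ Finset.range k, ((Apos ((m-k) + (j+1)) m).card : ℚ) * (m ! : ℚ)
      ≤ ∑ _j ∈ Finset.range k, ((m ^ (k-1) : ℕ) : ℚ) * (m ! : ℚ) := by
        apply Finset.sum_le_sum
        intro j hj
        have := hcard j (Finset.mem_range.mp hj)
        gcongr
    _ = ((k * m ^ (k-1) : ℕ) : ℚ) * (m ! : ℚ) := by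
        rw [Finset.sum_const, Finset.card_range, nsmul_eq_mul]
        push_cast
        ring

end Master

section Analytic

open Filter Topology

lemma tendsto_sub_const_atTop (c : ℝ) :
    Tendsto (fun m : ℕ => (m:ℝ) - c) atTop atTop := by
  apply tendsto_atTop_add_const_right atTop (-c) tendsto_natCast_atTop_atTop |>.congr
  intro m
  ring

lemma tendsto_div_sub_one (c : ℝ) :
    Tendsto (fun m : ℕ => (m:ℝ) / ((m:ℝ) - c)) atTop (nhds 1) := by
  have h1 : Tendsto (fun m : ℕ => 1 + c * (1 / ((m:ℝ) - c))) atTop (nhds 1) := by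
    have := ((tendsto_sub_const_atTop c).inv_tendsto_atTop).const_mul c
    simpa using (tendsto_const_nhds (x := (1:ℝ)) (f := atTop)).add this
  apply h1.congr'
  filter_upwards [Filter.eventually_gt_atTop (⌈c⌉₊ + 1)] with m hm
  have hm' : c < (m:ℝ) := by
    calc c ≤ (⌈c⌉₊ : ℝ) := Nat.le_ceil c
      _ < m := by exact_mod_cast Nat.lt_of_succ_lt hm
  have hne : (m:ℝ) - c ≠ 0 := by linarith
  field_simp
  ring

lemma tendsto_sub_div_one (c : ℝ) :
    Tendsto (fun m : ℕ => ((m:ℝ) - c) / (m:ℝ)) atTop (nhds 1) := by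
  have h1 : Tendsto (fun m : ℕ => 1 - c * (1 / (m:ℝ))) atTop (nhds 1) := by
    have := (tendsto_one_div_atTop_nhds_zero_nat).const_mul c
    simpa using (tendsto_const_nhds (x := (1:ℝ)) (f := atTop)).sub this
  apply h1.congr'
  filter_upwards [Filter.eventually_gt_atTop 0] with m hm
  have hne : (m:ℝ) ≠ 0 := by positivity
  rw [mul_one_div, sub_div, div_self hne]

lemma tendsto_ratio (c : ℝ) (k : ℕ) (hk : 1 ≤ k) :
    Tendsto (fun m : ℕ => (m:ℝ)^(k-1) / ((m:ℝ) - c)^k) atTop (nhds 0) := by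
  have h1 : Tendsto (fun m : ℕ => ((m:ℝ) / ((m:ℝ) - c))^(k-1) * (1 / ((m:ℝ) - c)))
      atTop (nhds 0) := by
    have hp := (tendsto_div_sub_one c).pow (k-1)
    have hi := (tendsto_sub_const_atTop c).inv_tendsto_atTop
    simpa using hp.mul (by simpa [Pi.inv_def] using hi)
  apply h1.congr'
  filter_upwards [Filter.eventually_gt_atTop (⌈c⌉₊ + 1)] with m hm
  have hm' : c < (m:ℝ) := by
    calc c ≤ (⌈c⌉₊ : ℝ) := Nat.le_ceil c
      _ < m := by exact_mod_cast Nat.lt_of_succ_lt hm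
  have hne : (m:ℝ) - c ≠ 0 := by linarith
  rw [div_pow, div_mul_div_comm, mul_one, ← pow_succ]
  congr 2
  omega

end Analytic

section RealBounds

open Filter Topology

variable {k m : ℕ}

lemma RT_low (k m : ℕ) : ((G (m-k) m : ℕ) : ℝ) ≤ ((T (m-k) m : ℚ) : ℝ) := by
  have h := G_le_T (m-k) m
  have h2 := Rat.cast_le (K := ℝ).mpr h
  push_cast at h2 ⊢
  exact h2

lemma RT_high (hm : 2*k + 4 ≤ m) :
    ((T (m-k) m : ℚ) : ℝ) ≤ ((G (m-k) m : ℕ) : ℝ) + (k:ℝ)*(m:ℝ)^(k-1)*(m ! : ℝ) := by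
  have h2 := Rat.cast_le (K := ℝ).mpr (hThigh hm)
  push_cast at h2 ⊢
  linarith

lemma RG_low (hm : 2*k + 4 ≤ m) :
    ((m-k).choose k : ℝ) * ((m ! : ℝ)/2^k) ≤ ((G (m-k) m : ℕ) : ℝ) := by
  have h2 := Rat.cast_le (K := ℝ).mpr (hGlow hm)
  push_cast at h2 ⊢
  linarith

lemma RG_high (hm : 2*k + 4 ≤ m) :
    ((G (m-k) m : ℕ) : ℝ) ≤ ((m-k).choose k : ℝ) * ((m ! : ℝ)/2^k)
      + (k:ℝ)*(m:ℝ)^(k-1)*(m ! : ℝ) := by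
  have h2 := Rat.cast_le (K := ℝ).mpr (hGhigh hm)
  push_cast at h2 ⊢
  linarith

lemma Rchoose_low (hm : 2*k + 4 ≤ m) :
    ((m:ℝ) - ((2*k-1 : ℕ):ℝ))^k ≤ ((m-k).choose k : ℝ) * (k ! : ℝ) := by
  by_cases hk0 : k = 0
  · subst hk0
    simp
  have h1 : ((m-k)+1-k)^k ≤ (m-k).descFactorial k := Nat.pow_sub_le_descFactorial (m-k) k
  rw [Nat.descFactorial_eq_factorial_mul_choose] at h1
  have h2 : (m-k)+1-k = m-(2*k-1) := by omega
  rw [h2] at h1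
  have h3 := (Nat.cast_le (α := ℝ)).mpr h1
  push_cast at h3
  calc ((m:ℝ) - ((2*k-1 : ℕ):ℝ))^k = (((m - (2*k-1) : ℕ)):ℝ)^k := by
        rw [Nat.cast_sub (by omega : 2*k-1 ≤ m)]
    _ ≤ ((m-k).choose k : ℝ) * (k ! : ℝ) := by linarith

lemma Rchoose_high (hm : 2*k + 4 ≤ m) :
    ((m-k).choose k : ℝ) * (k ! : ℝ) ≤ (m:ℝ)^k := by
  have h1 : (m-k).descFactorial k ≤ (m-k)^k := Nat.descFactorial_le_pow _ _
  rw [Nat.descFactorial_eq_factorial_mul_choose] at h1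
  have h2 : (m-k)^k ≤ m^k := Nat.pow_le_pow_left (by omega) _
  rw [mul_comm]
  exact_mod_cast le_trans h1 h2

end RealBounds

noncomputable def cR (k : ℕ) : ℝ := ((2*k-1 : ℕ) : ℝ)
noncomputable def KK (k : ℕ) : ℝ := (k:ℝ) * 2^k * (k ! : ℝ)
noncomputable def DD (k m : ℕ) : ℝ := (m:ℝ)^k * (m ! : ℝ) / (2^k * (k ! : ℝ))

section MainProof

open Filter Topology

/-- For fixed `k ≥ 0`, `T(m−k, m) ∼ G(m−k, m)` as `m → ∞`
(the ratio `T/G` tends to `1`), and hence also `T(m−k, m) ∼ (m^k / (2^k k!)) · m!`. -/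
theorem T_asymptotic (k : ℕ) :
    Filter.Tendsto
      (fun m : ℕ => ((T (m - k) m : ℚ) : ℝ) / (G (m - k) m : ℝ))
      Filter.atTop (nhds 1) ∧
    Filter.Tendsto
      (fun m : ℕ => ((T (m - k) m : ℚ) : ℝ) /
        ((m : ℝ) ^ k * (Nat.factorial m : ℝ) / (2 ^ k * (Nat.factorial k : ℝ))))
      Filter.atTop (nhds 1) := by
  have hk24 : ∀ᶠ m : ℕ in atTop, 2*k+4 ≤ m := eventually_ge_atTop (2*k+4)
  have hkfac : (0:ℝ) < k ! := by exact_mod_cast Nat.factorial_pos k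
  have h2k : (0:ℝ) < 2^k := by positivity
  have hfac : ∀ m : ℕ, (0:ℝ) < m ! := fun m => by exact_mod_cast Nat.factorial_pos m
  have hCpos : ∀ m : ℕ, 2*k+4 ≤ m → (0:ℝ) < ((m-k).choose k : ℝ) := fun m hm => by
    exact_mod_cast Nat.choose_pos (by omega : k ≤ m - k)
  have hgpos : ∀ m : ℕ, 2*k+4 ≤ m → (0:ℝ) < ((G (m-k) m : ℕ) : ℝ) := fun m hm =>
    lt_of_lt_of_le (by have := hCpos m hm; positivity) (RG_low hm)
  have hphipos : ∀ m : ℕ, 2*k+4 ≤ m → (0:ℝ) < (m:ℝ) - cR k := fun m hm => by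
    have h5 : ((2*k-1:ℕ):ℝ) < (m:ℝ) := by exact_mod_cast (by omega : 2*k-1 < m)
    rw [cR]; linarith
  have hm0 : ∀ m : ℕ, 2*k+4 ≤ m → (0:ℝ) < (m:ℝ) := fun m hm => by
    exact_mod_cast (by omega : 0 < m)
  have hDpos : ∀ m : ℕ, 2*k+4 ≤ m → (0:ℝ) < DD k m := fun m hm => by
    rw [DD]
    exact div_pos (mul_pos (pow_pos (hm0 m hm) k) (hfac m)) (by positivity)
  -- Part 1
  have part1 : Tendsto (fun m : ℕ => ((T (m - k) m : ℚ) : ℝ) / ((G (m - k) m : ℕ) : ℝ))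
      atTop (nhds 1) := by
    have hupfun : Tendsto (fun m : ℕ => 1 + KK k * ((m:ℝ)^(k-1) / ((m:ℝ) - cR k)^k))
        atTop (nhds 1) := by
      by_cases hk0 : k = 0
      · have hfun : (fun m : ℕ => 1 + KK k * ((m:ℝ)^(k-1) / ((m:ℝ) - cR k)^k))
            = fun _ => (1:ℝ) := funext fun m => by simp [KK, hk0]
        rw [hfun]
        exact tendsto_const_nhds
      · have h0 := (tendsto_ratio (cR k) k (by omega)).const_mul (KK k)
        simpa using (tendsto_const_nhds (x := (1:ℝ)) (f := atTop)).add h0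
    apply tendsto_of_tendsto_of_tendsto_of_le_of_le' tendsto_const_nhds hupfun
    · filter_upwards [hk24] with m hm
      exact (one_le_div (hgpos m hm)).mpr (RT_low k m)
    · filter_upwards [hk24] with m hm
      have hg := hgpos m hm
      have hφ := hphipos m hm
      have hφk : (0:ℝ) < ((m:ℝ) - cR k)^k := by positivity
      have hrpos : (0:ℝ) ≤ (m:ℝ)^(k-1) / ((m:ℝ) - cR k)^k := by positivity
      have hKpos : (0:ℝ) ≤ KK k := by rw [KK]; positivity
      have key : (k:ℝ)*(m:ℝ)^(k-1)*(m ! : ℝ)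
          ≤ KK k * ((m:ℝ)^(k-1)/((m:ℝ) - cR k)^k) * ((G (m-k) m : ℕ):ℝ) := by
        have h1 : (k:ℝ)*(m:ℝ)^(k-1)*(m ! : ℝ)
            ≤ KK k * ((m:ℝ)^(k-1)/((m:ℝ) - cR k)^k)
              * (((m-k).choose k : ℝ) * ((m ! : ℝ)/2^k)) := by
          have hEq : KK k * ((m:ℝ)^(k-1)/((m:ℝ) - cR k)^k)
                * (((m-k).choose k : ℝ) * ((m ! : ℝ)/2^k))
              = ((k:ℝ)*(k ! : ℝ)*((m-k).choose k : ℝ)*(m:ℝ)^(k-1)*(m ! : ℝ))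
                / (((m:ℝ) - cR k)^k) := by
            rw [KK]
            field_simp
          rw [hEq, le_div_iff₀ hφk]
          calc (k:ℝ)*(m:ℝ)^(k-1)*(m ! : ℝ) * ((m:ℝ) - cR k)^k
              ≤ (k:ℝ)*(m:ℝ)^(k-1)*(m ! : ℝ) * (((m-k).choose k : ℝ) * (k ! : ℝ)) := by
                have hcl : ((m:ℝ) - cR k)^k ≤ ((m-k).choose k : ℝ) * (k ! : ℝ) := by
                  rw [cR]; exact Rchoose_low hm
                apply mul_le_mul_of_nonneg_left hcl
                positivity
            _ = (k:ℝ)*(k ! : ℝ)*((m-k).choose k : ℝ)*(m:ℝ)^(k-1)*(m ! : ℝ) := by ring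
        refine h1.trans ?_
        apply mul_le_mul_of_nonneg_left (RG_low hm)
        positivity
      rw [div_le_iff₀ hg]
      calc ((T (m-k) m : ℚ):ℝ)
          ≤ ((G (m-k) m : ℕ):ℝ) + (k:ℝ)*(m:ℝ)^(k-1)*(m ! : ℝ) := RT_high hm
        _ ≤ ((G (m-k) m : ℕ):ℝ)
            + KK k * ((m:ℝ)^(k-1)/((m:ℝ) - cR k)^k) * ((G (m-k) m : ℕ):ℝ) := by linarith
        _ = (1 + KK k * ((m:ℝ)^(k-1)/((m:ℝ) - cR k)^k)) * ((G (m-k) m : ℕ):ℝ) := by ring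
  -- Part 2 : G / D → 1
  have hGD : Tendsto (fun m : ℕ => ((G (m-k) m : ℕ):ℝ) / DD k m) atTop (nhds 1) := by
    have hlowfun : Tendsto (fun m : ℕ => (((m:ℝ) - cR k)/(m:ℝ))^k) atTop (nhds 1) := by
      simpa using (tendsto_sub_div_one (cR k)).pow k
    have hupfun : Tendsto (fun m : ℕ => 1 + (2^k * (k ! : ℝ) * (k:ℝ)) * (1/(m:ℝ)))
        atTop (nhds 1) := by
      have h0 := tendsto_one_div_atTop_nhds_zero_nat.const_mul (2^k * (k ! : ℝ) * (k:ℝ))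
      simpa using (tendsto_const_nhds (x := (1:ℝ)) (f := atTop)).add h0
    apply tendsto_of_tendsto_of_tendsto_of_le_of_le' hlowfun hupfun
    · filter_upwards [hk24] with m hm
      have hD := hDpos m hm
      have hm' := hm0 m hm
      rw [le_div_iff₀ hD]
      have hid : (((m:ℝ) - cR k)/(m:ℝ))^k * DD k m
          = ((m:ℝ) - cR k)^k * ((m ! : ℝ)/(2^k * (k ! : ℝ))) := by
        rw [DD, div_pow]
        field_simp
      rw [hid]
      calc ((m:ℝ) - cR k)^k * ((m ! : ℝ)/(2^k * (k ! : ℝ)))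
          ≤ (((m-k).choose k : ℝ) * (k ! : ℝ)) * ((m ! : ℝ)/(2^k * (k ! : ℝ))) := by
            have hcl : ((m:ℝ) - cR k)^k ≤ ((m-k).choose k : ℝ) * (k ! : ℝ) := by
              rw [cR]; exact Rchoose_low hm
            apply mul_le_mul_of_nonneg_right hcl
            positivity
        _ = ((m-k).choose k : ℝ) * ((m ! : ℝ)/2^k) := by
            field_simp
        _ ≤ ((G (m-k) m : ℕ):ℝ) := RG_low hm
    · filter_upwards [hk24] with m hm
      have hD := hDpos m hm
      have hm' := hm0 m hm
      rw [div_le_iff₀ hD]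
      have he1 : ((m-k).choose k : ℝ) * ((m ! : ℝ)/2^k) ≤ DD k m := by
        rw [DD]
        calc ((m-k).choose k : ℝ) * ((m ! : ℝ)/2^k)
            = (((m-k).choose k : ℝ) * (k ! : ℝ)) * (m ! : ℝ) / (2^k * (k ! : ℝ)) := by
              field_simp
          _ ≤ (m:ℝ)^k * (m ! : ℝ) / (2^k * (k ! : ℝ)) := by
              gcongr
              exact Rchoose_high hm
      have he2 : (k:ℝ)*(m:ℝ)^(k-1)*(m ! : ℝ)
          = (2^k * (k ! : ℝ) * (k:ℝ)) * (1/(m:ℝ)) * DD k m := by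
        by_cases hk0 : k = 0
        · simp [hk0, DD]
        · have hmk : (m:ℝ)^k = (m:ℝ)^(k-1) * (m:ℝ) := by
            rw [← pow_succ]
            congr 1
            omega
          rw [DD, hmk]
          field_simp
      have hexp : (1 + (2^k * (k ! : ℝ) * (k:ℝ)) * (1/(m:ℝ))) * DD k m
          = DD k m + (2^k * (k ! : ℝ) * (k:ℝ)) * (1/(m:ℝ)) * DD k m := by ring
      rw [hexp, ← he2]
      have := RG_high hm
      linarith
  -- combine
  have part2 : Tendsto (fun m : ℕ => ((T (m - k) m : ℚ) : ℝ) / DD k m) atTop (nhds 1) := by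
    have hmul := part1.mul hGD
    rw [mul_one] at hmul
    apply hmul.congr'
    filter_upwards [hk24] with m hm
    have hg := (hgpos m hm).ne'
    rw [div_mul_div_comm, mul_comm ((T (m-k) m : ℚ):ℝ) ((G (m-k) m : ℕ):ℝ),
      mul_div_mul_left _ _ hg]
  exact ⟨part1, by simpa [DD] using part2⟩


end MainProof
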